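/- Let p, q ≥ 0, n = p + q, J = diag(I_p, −I_q) ∈ M_n(ℝ), and let L ∈ M_n(ℝ) be symmetric positive definite with Lᵀ·J·L = J. Then: (a) the number of eigenvalues of L strictly greater than 1, counted with multiplicity, is at most min(p,q); and (b) the product of all eigenvalues of L that are strictly greater than 1, counted with multiplicity, is at most r(L)^{min(p,q)}, where r(L) is the largest eigenvalue of L. -/

import Mathlib

open Matrix Polynomial



lemma aux_charpoly_conj {m : Type*} [Fintype m] [DecidableEq m] {R : Type*} [CommRing R]
    (U D V : Matrix m m R) (hUV : U * V = 1) :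
    (U * D * V).charpoly = D.charpoly := by
  let mC : Matrix m m R →+* Matrix m m R[X] := (Polynomial.C : R →+* R[X]).mapMatrix
  have key : charmatrix (U * D * V) = mC U * charmatrix D * mC V := by
    rw [charmatrix, charmatrix, mul_sub, sub_mul]
    congr 1
    · have hs : (Matrix.scalar m (X : R[X])) = (X : R[X]) • (1 : Matrix m m R[X]) := by
        ext i j
        by_cases hij : i = j
        · subst hij; simp [Matrix.scalar_apply, Matrix.one_apply]
        · simp [Matrix.scalar_apply, Matrix.one_apply, Matrix.diagonal_apply_ne _ hij, hij]
      rw [hs, mul_smul_comm, mul_one, smul_mul_assoc, ← RingHom.map_mul mC, hUV, RingHom.map_one]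
    · rw [← RingHom.map_mul mC, ← RingHom.map_mul mC]
  rw [Matrix.charpoly, key, det_mul, det_mul, Matrix.charpoly]
  have : (mC U).det * (mC V).det = 1 := by
    rw [← det_mul, ← RingHom.map_mul mC, hUV, RingHom.map_one, det_one]
  calc (mC U).det * (charmatrix D).det * (mC V).det
      = (charmatrix D).det * ((mC U).det * (mC V).det) := by ring
    _ = (charmatrix D).det := by rw [this, mul_one]

lemma aux_charpoly_diagonal {m : Type*} [Fintype m] [DecidableEq m] {R : Type*} [CommRing R]
    (d : m → R) : (Matrix.diagonal d).charpoly = ∏ i, (X - C (d i)) := by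
  have h : charmatrix (Matrix.diagonal d) = Matrix.diagonal (fun i => (X : R[X]) - C (d i)) := by
    ext i j
    by_cases hij : i = j
    · subst hij; simp
    · rw [charmatrix_apply_ne _ _ _ hij, Matrix.diagonal_apply_ne _ hij,
        Matrix.diagonal_apply_ne _ hij, map_zero, neg_zero]
  rw [Matrix.charpoly, h, det_diagonal]

lemma aux_roots_eq {m : Type*} [Fintype m] [DecidableEq m] {A : Matrix m m ℝ}
    (hA : A.IsHermitian) : A.charpoly.roots = Finset.univ.val.map hA.eigenvalues := by
  have h1 : A.charpoly = (Matrix.diagonal (RCLike.ofReal ∘ hA.eigenvalues) : Matrix m m ℝ).charpoly := by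
    conv_lhs => rw [hA.spectral_theorem]
    exact aux_charpoly_conj _ _ _ (Matrix.mem_unitaryGroup_iff.mp hA.eigenvectorUnitary.2)
  rw [h1, aux_charpoly_diagonal]
  have h2 : (∏ i, ((X : ℝ[X]) - C ((RCLike.ofReal ∘ hA.eigenvalues) i)))
      = ((Finset.univ.val.map hA.eigenvalues).map (fun a => (X : ℝ[X]) - C a)).prod := by
    rw [Multiset.map_map]
    rfl
  rw [h2, roots_multiset_prod_X_sub_C]


lemma aux_key_zero {n : ℕ} (f : Fin n → ℝ) (C : Finset (Fin n)) (hf : ∀ k ∉ C, 0 < f k)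
    (v : Fin n → ℝ) (hv : ∀ k ∈ C, v k = 0)
    (hiso : v ⬝ᵥ ((Matrix.diagonal f) *ᵥ v) = 0) : v = 0 := by
  have hdot : v ⬝ᵥ ((Matrix.diagonal f) *ᵥ v) = ∑ k, f k * v k ^ 2 := by
    simp only [dotProduct, Matrix.mulVec_diagonal]
    apply Finset.sum_congr rfl
    intro k _
    ring
  have hterms : ∀ k ∈ Finset.univ, (0:ℝ) ≤ f k * v k ^ 2 := by
    intro k _
    by_cases hk : k ∈ C
    · simp [hv k hk]
    · exact mul_nonneg (hf k hk).le (sq_nonneg _)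
  have hzero := (Finset.sum_eq_zero_iff_of_nonneg hterms).mp (by rw [← hdot, hiso])
  funext k
  by_cases hk : k ∈ C
  · exact hv k hk
  · have h1 := hzero k (Finset.mem_univ k)
    have h2 : v k ^ 2 = 0 := by
      rcases mul_eq_zero.mp h1 with h | h
      · exact absurd h (ne_of_gt (hf k hk))
      · exact h
    exact pow_eq_zero_iff two_ne_zero |>.mp h2

lemma aux_sum_dot {ι : Type*} {n : ℕ} (s : Finset ι) (f : ι → Fin n → ℝ) (w : Fin n → ℝ) :
    (∑ i ∈ s, f i) ⬝ᵥ w = ∑ i ∈ s, f i ⬝ᵥ w := by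
  simp only [dotProduct, Finset.sum_apply, Finset.sum_mul]
  exact Finset.sum_comm

lemma aux_dot_sum {ι : Type*} {n : ℕ} (s : Finset ι) (v : Fin n → ℝ) (f : ι → Fin n → ℝ) :
    v ⬝ᵥ (∑ i ∈ s, f i) = ∑ i ∈ s, v ⬝ᵥ f i := by
  simp only [dotProduct, Finset.sum_apply, Finset.mul_sum]
  exact Finset.sum_comm

lemma aux_card_bound {n : ℕ} {A : Matrix (Fin n) (Fin n) ℝ} (hA : A.IsHermitian)
    (g : Fin n → ℝ) (C : Finset (Fin n)) (hg : ∀ k ∉ C, 0 < g k)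
    (hiso : ∀ i j, 1 < hA.eigenvalues i → 1 < hA.eigenvalues j →
      (⇑(hA.eigenvectorBasis i) : Fin n → ℝ) ⬝ᵥ
        ((Matrix.diagonal g) *ᵥ ⇑(hA.eigenvectorBasis j)) = 0) :
    (Finset.univ.filter fun i => 1 < hA.eigenvalues i).card ≤ C.card := by
  classical
  set S := Finset.univ.filter fun i => 1 < hA.eigenvalues i with hS
  set u := hA.eigenvectorBasis with hu
  have hortho : ∀ a b : Fin n, (⇑(u a) : Fin n → ℝ) ⬝ᵥ ⇑(u b) = if a = b then 1 else 0 := by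
    intro a b
    have := (orthonormal_iff_ite.mp u.orthonormal) a b
    rw [EuclideanSpace.inner_eq_star_dotProduct] at this
    rw [dotProduct_comm]
    simpa using this
  let w : {i // i ∈ S} → ({k // k ∈ C} → ℝ) := fun i k => u i.1 k.1
  have hw : LinearIndependent ℝ w := by
    rw [Fintype.linearIndependent_iff]
    intro c hc
    set v : Fin n → ℝ := ∑ i : {i // i ∈ S}, c i • (⇑(u i.1) : Fin n → ℝ) with hv
    have hvC : ∀ k ∈ C, v k = 0 := by
      intro k hk
      have h := congrFun hc ⟨k, hk⟩
      simpa [v, Finset.sum_apply, w] using h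
    have hvdot : v ⬝ᵥ (Matrix.diagonal g *ᵥ v) = 0 := by
      have hm : Matrix.diagonal g *ᵥ v
          = ∑ i : {i // i ∈ S}, c i • (Matrix.diagonal g *ᵥ ⇑(u i.1)) := by
        rw [hv]
        simp only [← Matrix.mulVecLin_apply, map_sum, LinearMap.map_smul]
      rw [hm, hv, aux_sum_dot]
      apply Finset.sum_eq_zero
      intro i _
      rw [smul_dotProduct, aux_dot_sum]
      have : ∀ j ∈ Finset.univ, (⇑(u i.1) : Fin n → ℝ) ⬝ᵥ (c j • (Matrix.diagonal g *ᵥ ⇑(u j.1))) = 0 := by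
        intro j _
        rw [dotProduct_smul]
        have hi : 1 < hA.eigenvalues i.1 := (Finset.mem_filter.mp i.2).2
        have hj : 1 < hA.eigenvalues j.1 := (Finset.mem_filter.mp j.2).2
        rw [hiso _ _ hi hj]
        simp
      rw [Finset.sum_congr rfl this]
      simp
    have hv0 : v = 0 := aux_key_zero g C hg v hvC hvdot
    intro a
    have h0 : (⇑(u a.1) : Fin n → ℝ) ⬝ᵥ v = 0 := by rw [hv0]; simp
    rw [hv, aux_dot_sum] at h0
    have heval : ∀ j ∈ Finset.univ,
        (⇑(u a.1) : Fin n → ℝ) ⬝ᵥ (c j • (⇑(u j.1) : Fin n → ℝ))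
          = if j = a then c j else 0 := by
      intro j _
      rw [dotProduct_smul, hortho]
      by_cases hja : j = a
      · simp [hja]
      · have : ¬ (a.1 = j.1) := fun h => hja (Subtype.ext h.symm)
        simp [this, hja]
    rw [Finset.sum_congr rfl heval, Finset.sum_ite_eq' Finset.univ a c] at h0
    simpa using h0
  have h1 : S.card = Fintype.card {i // i ∈ S} := (Fintype.card_coe S).symm
  have h2 := hw.fintype_card_le_finrank
  rw [Module.finrank_pi] at h2
  rw [h1]
  simpa [Fintype.card_coe] using h2


lemma aux_prod_le_pow (t : Multiset ℝ) (r : ℝ) (hr : 0 ≤ r) (h0 : ∀ x ∈ t, 0 ≤ x)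
    (h1 : ∀ x ∈ t, x ≤ r) : t.prod ≤ r ^ (Multiset.card t) := by
  induction t using Multiset.induction_on with
  | empty => simp
  | cons a s ih =>
    rw [Multiset.prod_cons, Multiset.card_cons, pow_succ]
    have ha : a ≤ r := h1 a (Multiset.mem_cons_self a s)
    have hs : s.prod ≤ r ^ (Multiset.card s) :=
      ih (fun x hx => h0 x (Multiset.mem_cons_of_mem hx))
        (fun x hx => h1 x (Multiset.mem_cons_of_mem hx))
    have hsp : 0 ≤ s.prod := Multiset.prod_nonneg (fun x hx => h0 x (Multiset.mem_cons_of_mem hx))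
    calc a * s.prod ≤ r * r ^ (Multiset.card s) :=
          mul_le_mul ha hs hsp hr
      _ = r ^ (Multiset.card s) * r := by ring

theorem statement17 (p q : ℕ) (L : Matrix (Fin (p + q)) (Fin (p + q)) ℝ)
    (hsymm : L.IsSymm) (hpos : L.PosDef)
    (hL : Lᵀ * Matrix.diagonal (fun i : Fin (p + q) => if (i : ℕ) < p then (1 : ℝ) else -1) * L
        = Matrix.diagonal (fun i : Fin (p + q) => if (i : ℕ) < p then (1 : ℝ) else -1)) :
    (L.charpoly.roots.filter fun x => 1 < x).card ≤ min p q ∧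
      (L.charpoly.roots.filter fun x => 1 < x).prod ≤
        (sSup {x : ℝ | x ∈ L.charpoly.roots}) ^ min p q := by
  classical
  have hH : L.IsHermitian := hpos.1
  set f : Fin (p + q) → ℝ := fun i => if (i : ℕ) < p then (1 : ℝ) else -1 with hfdef
  set μ : Fin (p + q) → ℝ := hH.eigenvalues with hμ
  set u := hH.eigenvectorBasis with hu
  have hroots : L.charpoly.roots = Finset.univ.val.map μ := aux_roots_eq hH
  have hμpos : ∀ i, 0 < μ i := fun i => hpos.eigenvalues_pos i
  have hLJL : L * Matrix.diagonal f * L = Matrix.diagonal f := by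
    have h := hL
    rw [Matrix.IsSymm.eq hsymm] at h
    exact h
  -- isotropy
  have hiso : ∀ i j, μ i * μ j ≠ 1 →
      (⇑(u i) : Fin (p + q) → ℝ) ⬝ᵥ ((Matrix.diagonal f) *ᵥ ⇑(u j)) = 0 := by
    intro i j hij
    set x := (⇑(u i) : Fin (p + q) → ℝ) ⬝ᵥ ((Matrix.diagonal f) *ᵥ ⇑(u j)) with hx
    have key : x = (μ i * μ j) * x := by
      conv_lhs => rw [hx, ← hLJL]
      rw [← Matrix.mulVec_mulVec, ← Matrix.mulVec_mulVec]
      rw [hu, hH.mulVec_eigenvectorBasis, ← hμ, ← hu]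
      rw [Matrix.mulVec_smul, Matrix.mulVec_smul, dotProduct_smul]
      rw [Matrix.dotProduct_mulVec, ← Matrix.mulVec_transpose, Matrix.IsSymm.eq hsymm]
      rw [hu, hH.mulVec_eigenvectorBasis, ← hμ, ← hu]
      rw [smul_dotProduct]
      simp only [smul_eq_mul, hx]
      ring
    have : (1 - μ i * μ j) * x = 0 := by linarith [key]
    rcases mul_eq_zero.mp this with h | h
    · exact absurd (by linarith : μ i * μ j = 1) hij
    · exact h
  have hiso' : ∀ i j, 1 < μ i → 1 < μ j →
      (⇑(u i) : Fin (p + q) → ℝ) ⬝ᵥ ((Matrix.diagonal f) *ᵥ ⇑(u j)) = 0 := by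
    intro i j hi hj
    exact hiso i j (by nlinarith)
  set S : Finset (Fin (p + q)) := Finset.univ.filter (fun i => 1 < μ i) with hSdef
  -- card of filtered roots
  have hcard_eq : (L.charpoly.roots.filter fun x => 1 < x).card = S.card := by
    rw [hroots, Multiset.filter_map, Multiset.card_map]
    rfl
  -- C_p : coordinates < p
  set Cp : Finset (Fin (p + q)) := Finset.univ.filter (fun k => (k : ℕ) < p) with hCp
  have hCpcard : Cp.card = p := by
    have himg : Cp = Finset.image (fun j : Fin p => Fin.castLE (Nat.le_add_right p q) j)
        Finset.univ := by
      ext k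
      simp only [hCp, Finset.mem_filter, Finset.mem_univ, true_and, Finset.mem_image]
      constructor
      · intro hk
        exact ⟨⟨(k : ℕ), hk⟩, by simp [Fin.castLE, Fin.ext_iff]⟩
      · rintro ⟨j, _, rfl⟩
        exact j.2
    rw [himg, Finset.card_image_of_injective _ (Fin.castLE_injective _), Finset.card_univ,
      Fintype.card_fin]
  have hCqcard : (Finset.univ.filter (fun k : Fin (p + q) => ¬ (k : ℕ) < p)).card = q := by
    have := Finset.card_filter_add_card_filter_not
      (s := (Finset.univ : Finset (Fin (p + q)))) (p := fun k : Fin (p + q) => (k : ℕ) < p)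
    rw [Finset.card_univ, Fintype.card_fin] at this
    have h2 : (Finset.univ.filter (fun k : Fin (p + q) => (k : ℕ) < p)).card = p := hCpcard
    omega
  -- bound S.card ≤ p
  have hSp : S.card ≤ p := by
    refine le_trans ?_ hCpcard.le
    apply aux_card_bound hH (fun k => - f k) Cp
    · intro k hk
      have : ¬ (k : ℕ) < p := by simpa [hCp] using hk
      simp [hfdef, this]
    · intro i j hi hj
      have : Matrix.diagonal (fun k => - f k) = - Matrix.diagonal f := by
        rw [← Matrix.diagonal_neg]
      rw [this, Matrix.neg_mulVec, dotProduct_neg, hiso' i j hi hj, neg_zero]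
  have hSq : S.card ≤ q := by
    refine le_trans ?_ hCqcard.le
    apply aux_card_bound hH f (Finset.univ.filter (fun k : Fin (p + q) => ¬ (k : ℕ) < p))
    · intro k hk
      have : (k : ℕ) < p := by simpa using hk
      simp [hfdef, this]
    · exact hiso'
  have parta : (L.charpoly.roots.filter fun x => 1 < x).card ≤ min p q := by
    rw [hcard_eq]
    exact le_min hSp hSq
  refine ⟨parta, ?_⟩
  -- part b
  rcases Nat.eq_zero_or_pos (min p q) with h0 | hmin
  · rw [h0, pow_zero]
    have : (L.charpoly.roots.filter fun x => 1 < x).card = 0 := by omega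
    rw [Multiset.card_eq_zero.mp this]
    simp
  · -- min p q > 0 so p + q > 0
    have hn : 0 < p + q := by omega
    set T : Set ℝ := {x : ℝ | x ∈ L.charpoly.roots} with hT
    have hTfin : T.Finite := L.charpoly.roots.finite_toSet
    have hbdd : BddAbove T := hTfin.bddAbove
    have hmem : ∀ i : Fin (p + q), μ i ∈ T := by
      intro i
      rw [hT]
      simp only [Set.mem_setOf_eq, hroots]
      exact Multiset.mem_map_of_mem _ (Finset.mem_val.mpr (Finset.mem_univ i))
    have hle : ∀ x ∈ L.charpoly.roots, x ≤ sSup T := fun x hx => le_csSup hbdd hx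
    -- det L = 1
    have hdetJ : (Matrix.diagonal f).det ≠ 0 := by
      rw [Matrix.det_diagonal]
      apply Finset.prod_ne_zero_iff.mpr
      intro i _
      by_cases h : (i : ℕ) < p <;> simp [hfdef, h]
    have hdet2 : L.det * L.det = 1 := by
      have h := congrArg Matrix.det hL
      rw [Matrix.det_mul, Matrix.det_mul, Matrix.det_transpose] at h
      have h' : (L.det * L.det) * (Matrix.diagonal f).det = 1 * (Matrix.diagonal f).det := by
        rw [one_mul]; linear_combination h
      exact mul_right_cancel₀ hdetJ h'
    have hdet1 : L.det = 1 := by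
      have hpos' := hpos.det_pos
      nlinarith
    have hprod1 : ∏ i, μ i = 1 := by
      have := hH.det_eq_prod_eigenvalues
      rw [hdet1] at this
      have h2 : (1 : ℝ) = ∏ i, μ i := by simpa using this
      exact h2.symm
    have hone : (1 : ℝ) ≤ sSup T := by
      have hex : ∃ i, 1 ≤ μ i := by
        by_contra hall
        push_neg at hall
        have hne : Nonempty (Fin (p + q)) := ⟨⟨0, hn⟩⟩
        have huniv : (Finset.univ : Finset (Fin (p + q))).Nonempty := Finset.univ_nonempty
        have := Finset.prod_lt_prod_of_nonempty (fun i _ => hμpos i) (fun i _ => hall i) huniv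
        rw [Finset.prod_const_one] at this
        rw [hprod1] at this
        exact lt_irrefl _ this
      obtain ⟨i, hi⟩ := hex
      exact le_trans hi (le_csSup hbdd (hmem i))
    have hfilt_mem : ∀ x ∈ (L.charpoly.roots.filter fun x => 1 < x), x ∈ L.charpoly.roots :=
      fun x hx => (Multiset.mem_filter.mp hx).1
    calc (L.charpoly.roots.filter fun x => 1 < x).prod
        ≤ (sSup T) ^ (Multiset.card (L.charpoly.roots.filter fun x => 1 < x)) := by
          apply aux_prod_le_pow _ _ (le_trans zero_le_one hone)
          · intro x hx
            have := (Multiset.mem_filter.mp hx).2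
            linarith
          · intro x hx
            exact hle x (hfilt_mem x hx)
      _ ≤ (sSup T) ^ (min p q) := by
          apply pow_le_pow_right₀ hone
          exact parta
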